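/- For α ∈ (0,1), the first derivative of the CTS moment generating function satisfies M'_{CTS}(λ₊ − s) ~ C·s^{−(1−α)} as s → 0⁺, where C = M_{CTS}(λ₊)/((1−α)(λ₊^{α−2}+λ₋^{α−2})) > 0; i.e., lim_{s→0⁺} s^{1−α}·M'_{CTS}(λ₊ − s) = C. -/

import Mathlib

open Filter Topology

/-- for α ∈ (0,1), M'_{CTS}(λ₊ − s) ~ C·s^{−(1−α)} as s → 0⁺ with
C = M_{CTS}(λ₊)/((1−α)(λ₊^{α−2}+λ₋^{α−2})) > 0, i.e.
lim_{s→0⁺} s^{1−α}·M'_{CTS}(λ₊ − s) = C. -/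
theorem mgfCTS_first_deriv_tail (α lp lm : ℝ) (hα : α ∈ Set.Ioo (0:ℝ) 1)
    (hlp : 0 < lp) (hlm : 0 < lm)
    (PhiH : ℝ → ℝ)
    (hPhiH : PhiH = fun u =>
      ((lp - u) ^ α - lp ^ α + (lm + u) ^ α - lm ^ α) /
        (α * (α - 1) * (lp ^ (α - 2) + lm ^ (α - 2))) +
      u * (lp ^ (α - 1) - lm ^ (α - 1)) / ((α - 1) * (lp ^ (α - 2) + lm ^ (α - 2))))
    (M : ℝ → ℝ) (hM : M = fun u => Real.exp (PhiH u)) :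
    0 < M lp / ((1 - α) * (lp ^ (α - 2) + lm ^ (α - 2))) ∧
    Tendsto (fun s : ℝ => s ^ (1 - α) * deriv M (lp - s)) (𝓝[>] 0)
      (𝓝 (M lp / ((1 - α) * (lp ^ (α - 2) + lm ^ (α - 2))))) := by
  obtain ⟨hα0, hα1⟩ := hα
  set D : ℝ := lp ^ (α - 2) + lm ^ (α - 2) with hD
  have hDpos : 0 < D := by positivity
  clear_value D
  have hαne : α ≠ 0 := ne_of_gt hα0
  have hα1ne : α - 1 ≠ 0 := by linarith
  have hDne : D ≠ 0 := ne_of_gt hDpos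
  have hMpos : 0 < M lp := by rw [hM]; exact Real.exp_pos _
  constructor
  · apply div_pos hMpos
    apply mul_pos (by linarith) hDpos
  -- derivative of M
  have hderiv : ∀ u : ℝ, 0 < lp - u → 0 < lm + u →
      deriv M u = M u * ((-(α * (lp - u) ^ (α - 1)) + α * (lm + u) ^ (α - 1)) /
        (α * (α - 1) * D) + (lp ^ (α - 1) - lm ^ (α - 1)) / ((α - 1) * D)) := by
    intro u hu1 hu2
    have h1 : HasDerivAt (fun u : ℝ => (lp - u) ^ α) (-(α * (lp - u) ^ (α - 1))) u := by
      have := (Real.hasDerivAt_rpow_const (x := lp - u) (p := α) (Or.inl hu1.ne')).comp u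
        ((hasDerivAt_id u).const_sub lp)
      simpa [mul_comm, Function.comp_def] using this
    have h2 : HasDerivAt (fun u : ℝ => (lm + u) ^ α) (α * (lm + u) ^ (α - 1)) u := by
      have := (Real.hasDerivAt_rpow_const (x := lm + u) (p := α) (Or.inl hu2.ne')).comp u
        ((hasDerivAt_id u).const_add lm)
      simpa [mul_comm, Function.comp_def] using this
    have hPhi : HasDerivAt PhiH ((-(α * (lp - u) ^ (α - 1)) + α * (lm + u) ^ (α - 1)) /
        (α * (α - 1) * D) + (lp ^ (α - 1) - lm ^ (α - 1)) / ((α - 1) * D)) u := by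
      rw [hPhiH]
      have := ((((h1.sub_const (lp ^ α)).add h2).sub_const (lm ^ α)).div_const
        (α * (α - 1) * D)).add (((hasDerivAt_id u).mul_const
        (lp ^ (α - 1) - lm ^ (α - 1))).div_const ((α - 1) * D))
      simp only [one_mul] at this; exact this
    have hMd : HasDerivAt M (Real.exp (PhiH u) * ((-(α * (lp - u) ^ (α - 1)) +
        α * (lm + u) ^ (α - 1)) / (α * (α - 1) * D) +
        (lp ^ (α - 1) - lm ^ (α - 1)) / ((α - 1) * D))) u := by
      rw [hM]; exact hPhi.exp
    rw [hMd.deriv, hM]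
  -- the auxiliary function
  set G : ℝ → ℝ := fun s => M (lp - s) * ((-1 + s ^ (1 - α) * (lm + lp - s) ^ (α - 1)) /
    ((α - 1) * D) + s ^ (1 - α) * (lp ^ (α - 1) - lm ^ (α - 1)) / ((α - 1) * D)) with hG
  have hev : (fun s : ℝ => s ^ (1 - α) * deriv M (lp - s)) =ᶠ[𝓝[>] 0] G := by
    filter_upwards [Ioo_mem_nhdsGT_of_mem (by constructor <;> [rfl; exact hlp] :
      (0:ℝ) ∈ Set.Ico 0 lp)] with s hs
    obtain ⟨hs0, hslp⟩ := hs
    have h1 : 0 < lp - (lp - s) := by linarith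
    have h2 : 0 < lm + (lp - s) := by linarith
    rw [hderiv _ h1 h2]
    have hsub : lp - (lp - s) = s := by ring
    have hsub2 : lm + (lp - s) = lm + lp - s := by ring
    rw [hsub, hsub2, hG]
    have hss : s ^ (1 - α) * s ^ (α - 1) = 1 := by
      rw [← Real.rpow_add hs0]
      norm_num
    have htpos : (0:ℝ) < s ^ (1 - α) := Real.rpow_pos_of_pos hs0 _
    have hr : s ^ (α - 1) = (s ^ (1 - α))⁻¹ :=
      eq_inv_of_mul_eq_one_left (by rw [mul_comm]; exact hss)
    rw [hr]
    field_simp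
  have hlim : Tendsto G (𝓝[>] 0) (𝓝 (M lp / ((1 - α) * D))) := by
    have hMc : Tendsto (fun s : ℝ => M (lp - s)) (𝓝[>] 0) (𝓝 (M lp)) := by
      have hcont : ContinuousAt (fun s : ℝ => M (lp - s)) 0 := by
        rw [hM, hPhiH]
        simp only [sub_sub_cancel]
        apply Real.continuous_exp.continuousAt.comp
        apply ContinuousAt.add
        · apply ContinuousAt.div_const
          apply ContinuousAt.sub
          apply ContinuousAt.add
          apply ContinuousAt.sub
          · exact Real.continuousAt_rpow_const 0 α (Or.inr hα0.le)
          · exact continuousAt_const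
          · exact ContinuousAt.rpow_const (by fun_prop)
              (Or.inl (by simp; positivity))
          · exact continuousAt_const
        · apply ContinuousAt.div_const
          exact (continuousAt_const.sub continuousAt_id).mul continuousAt_const
      simpa using hcont.continuousWithinAt.tendsto
    have ht0 : Tendsto (fun s : ℝ => s ^ (1 - α)) (𝓝[>] 0) (𝓝 0) := by
      have : ContinuousAt (fun s : ℝ => s ^ (1 - α)) 0 :=
        Real.continuousAt_rpow_const 0 (1 - α) (Or.inr (by linarith))
      have h : Tendsto (fun s : ℝ => s ^ (1 - α)) (𝓝[>] 0) (𝓝 ((0:ℝ) ^ (1 - α))) :=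
        this.tendsto.mono_left nhdsWithin_le_nhds
      rwa [Real.zero_rpow (by linarith : (1:ℝ) - α ≠ 0)] at h
    have hB : Tendsto (fun s : ℝ => (lm + lp - s) ^ (α - 1)) (𝓝[>] 0)
        (𝓝 ((lm + lp) ^ (α - 1))) := by
      have : ContinuousAt (fun s : ℝ => (lm + lp - s) ^ (α - 1)) 0 :=
        ContinuousAt.rpow_const (by fun_prop) (Or.inl (by simp; positivity))
      simpa using this.continuousWithinAt.tendsto
    have hfinal : Tendsto G (𝓝[>] 0)
        (𝓝 (M lp * ((-1 + 0 * (lm + lp) ^ (α - 1)) / ((α - 1) * D) +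
          0 * (lp ^ (α - 1) - lm ^ (α - 1)) / ((α - 1) * D)))) := by
      exact hMc.mul ((((tendsto_const_nhds.add (ht0.mul hB)).div_const _).add
        (((ht0.mul tendsto_const_nhds)).div_const _)))
    have heq : M lp * ((-1 + 0 * (lm + lp) ^ (α - 1)) / ((α - 1) * D) +
        0 * (lp ^ (α - 1) - lm ^ (α - 1)) / ((α - 1) * D)) = M lp / ((1 - α) * D) := by
      have hne1 : (α - 1) * D ≠ 0 := mul_ne_zero hα1ne hDne
      have hne2 : (1 - α) * D ≠ 0 := mul_ne_zero (by linarith) hDne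
      rw [zero_mul, add_zero, zero_mul, zero_div, add_zero,
        (div_eq_div_iff hne1 hne2).2 (by ring : (-1:ℝ) * ((1 - α) * D) = 1 * ((α - 1) * D)),
        mul_one_div]
    rwa [heq] at hfinal
  exact Tendsto.congr' hev.symm hlim
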